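/- arXiv:1606.05502 — 3 statements merged into one kernel-verified Lean document; each statement's English description precedes it below -/
import Mathlib

section
/- Let H/K be a finite extension of fields, n = [H:K], and let σ be a field automorphism of H fixing K pointwise, of exact order e. Let c ∈ H, c ≠ 0, and suppose that N := c·σ(c)·σ^2(c)···σ^{e−1}(c) lies in K. Then e divides n, and the characteristic polynomial over K of the K-linear endomorphism of H given by x ↦ c·σ(x) equals (X^e − N)^{n/e}. -/
/-!
Let `H/K` be a finite extension of fields, `n = [H:K]`, and `σ` a field automorphism of `H`
fixing `K` pointwise, of exact order `e`.  Let `c ∈ H`, `c ≠ 0`, and suppose that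
`N = c·σ(c)···σ^{e-1}(c)` lies in `K`.  Then `e ∣ n` and the characteristic polynomial over
`K` of the `K`-linear endomorphism `x ↦ c·σ(x)` of `H` equals `(X^e - N)^{n/e}`.
-/

open Polynomial

section AuxCyclic

variable {F M : Type*} [Field F] [AddCommGroup M] [Module F M]

/-- If `h` and `h'` both kill `v`, so does any combination `a*h + b*h'`. -/
private lemma aux_kill_comb (f : Module.End F M) {v : M} {h h' : F[X]}
    (H1 : aeval f h v = 0) (H2 : aeval f h' v = 0) (a b : F[X]) :
    aeval f (a * h + b * h') v = 0 := by
  simp only [map_add, map_mul, Module.End.mul_apply, LinearMap.add_apply, H1, H2, map_zero,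
    add_zero]

private lemma aux_kill_mul (f : Module.End F M) {v : M} {h : F[X]}
    (H1 : aeval f h v = 0) (a : F[X]) :
    aeval f (a * h) v = 0 := by
  simp only [map_mul, Module.End.mul_apply, H1, map_zero]

/-- primary case -/
private lemma aux_primary (f : Module.End F M) (p : F[X]) (hp : Prime p) (k : ℕ) (hk : 1 ≤ k)
    (r : F[X]) (h1 : ∀ x, aeval f (p ^ k * r) x = 0)
    (h2 : ∀ h : F[X], (∀ x, aeval f (h * r) x = 0) → p ^ k ∣ h) :
    ∃ v, aeval f (p ^ k) v = 0 ∧ ∀ h : F[X], aeval f h v = 0 → p ^ k ∣ h := by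
  letI := Classical.decEq F[X]
  have hnd : ¬ p ^ k ∣ p ^ (k - 1) := by
    intro hd
    have := (pow_dvd_pow_iff hp.ne_zero hp.not_unit).mp hd
    omega
  obtain ⟨u, hu⟩ : ∃ u, aeval f (p ^ (k - 1) * r) u ≠ 0 := by
    by_contra hhh
    push_neg at hhh
    exact hnd (h2 _ hhh)
  refine ⟨aeval f r u, ?_, ?_⟩
  · rw [← Module.End.mul_apply, ← map_mul]
    exact h1 u
  · intro h hh
    -- gcd of h and p^k kills v as well
    have hg : aeval f (EuclideanDomain.gcd h (p ^ k)) (aeval f r u) = 0 := by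
      rw [EuclideanDomain.gcd_eq_gcd_ab h (p ^ k)]
      have h2' : aeval f (p ^ k) (aeval f r u) = 0 := by
        rw [← Module.End.mul_apply, ← map_mul]; exact h1 u
      have := aux_kill_comb f hh h2' (EuclideanDomain.gcdA h (p ^ k))
        (EuclideanDomain.gcdB h (p ^ k))
      simpa [mul_comm] using this
    obtain ⟨j, hj, hassoc⟩ := (dvd_prime_pow hp k).mp (EuclideanDomain.gcd_dvd_right h (p ^ k))
    have hjk : j = k := by
      by_contra hne
      have hjk1 : j ≤ k - 1 := by omega
      have : aeval f (p ^ (k - 1)) (aeval f r u) = 0 := by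
        obtain ⟨a, ha⟩ : EuclideanDomain.gcd h (p ^ k) ∣ p ^ (k - 1) :=
          dvd_trans hassoc.dvd (pow_dvd_pow p hjk1)
        rw [ha]
        rw [mul_comm]
        exact aux_kill_mul f hg a
      rw [← Module.End.mul_apply, ← map_mul] at this
      exact hu this
    subst hjk
    exact hassoc.symm.dvd.trans (EuclideanDomain.gcd_dvd_left _ _)

private lemma aux_cyclic_rel (f : Module.End F M) :
    ∀ (n : ℕ) (g r : F[X]), g.natDegree ≤ n → g.Monic →
      (∀ x, aeval f (g * r) x = 0) →
      (∀ h : F[X], (∀ x, aeval f (h * r) x = 0) → g ∣ h) →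
      ∃ v, aeval f g v = 0 ∧ ∀ h : F[X], aeval f h v = 0 → g ∣ h := by
  intro n
  induction n using Nat.strong_induction_on with
  | _ n ih =>
    intro g r hdeg hmonic h1 h2
    by_cases hunit : IsUnit g
    · have hg1 : g = 1 := hmonic.eq_one_of_isUnit hunit
      exact ⟨0, by simp, fun h _ => hg1 ▸ one_dvd h⟩
    · obtain ⟨p0, hp0, hp0d⟩ :=
        WfDvdMonoid.exists_irreducible_factor hunit hmonic.ne_zero
      set p := p0 * C (p0.leadingCoeff)⁻¹ with hpdef
      have hassoc : Associated p0 p := by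
        refine associated_mul_unit_right _ _ ?_
        exact Polynomial.isUnit_C.mpr (isUnit_iff_ne_zero.mpr (inv_ne_zero (Polynomial.leadingCoeff_ne_zero.mpr hp0.ne_zero)))
      have hp : Irreducible p := hassoc.irreducible hp0
      have hpd : p ∣ g := (hassoc.symm.dvd).trans hp0d
      obtain ⟨k, q, hpq, hgeq⟩ := WfDvdMonoid.max_power_factor hmonic.ne_zero hp
      have hk : 1 ≤ k := by
        rcases Nat.eq_zero_or_pos k with hk0 | hk0
        · exfalso; apply hpq
          have := hpd
          rw [hgeq, hk0, pow_zero, one_mul] at this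
          exact this
        · exact hk0
      have hpkmonic : (p ^ k).Monic :=
        ((Polynomial.monic_mul_leadingCoeff_inv hp0.ne_zero).pow k)
      have hq : q.Monic := by
        have := hmonic
        rw [hgeq] at this
        exact hpkmonic.of_mul_monic_left this
      have hpdegpos : 0 < p.natDegree := hp.natDegree_pos
      by_cases hqu : q = 1
      · rw [hqu, mul_one] at hgeq
        rw [hgeq] at h1 h2 ⊢
        exact aux_primary f p hp.prime k hk r h1 h2
      · have hcop : IsCoprime (p ^ k) q := ((hp.coprime_iff_not_dvd).mpr hpq).pow_left
        obtain ⟨v₁, hv₁0, hv₁⟩ := aux_primary f p hp.prime k hk (q * r)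
          (fun x => by rw [← mul_assoc, ← hgeq]; exact h1 x)
          (fun h hh => by
            have hg : g ∣ h * q := h2 _ (fun x => by rw [mul_assoc]; exact hh x)
            rw [hgeq] at hg
            exact (mul_dvd_mul_iff_right hq.ne_zero).mp hg)
        have hqlt : q.natDegree < n := by
          have hgdeg : g.natDegree = k * p.natDegree + q.natDegree := by
            rw [hgeq, Polynomial.natDegree_mul (pow_ne_zero _ hp.ne_zero) hq.ne_zero,
              Polynomial.natDegree_pow]
          have : 1 ≤ k * p.natDegree := Nat.one_le_iff_ne_zero.mpr (by positivity)
          omega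
        obtain ⟨v₂, hv₂0, hv₂⟩ := ih q.natDegree hqlt q (p ^ k * r) le_rfl hq
          (fun x => by rw [← mul_assoc, mul_comm q (p ^ k), ← hgeq]; exact h1 x)
          (fun h hh => by
            have hg : g ∣ h * p ^ k := h2 _ (fun x => by rw [mul_assoc]; exact hh x)
            rw [hgeq, mul_comm (p ^ k) q] at hg
            exact (mul_dvd_mul_iff_right (pow_ne_zero _ hp.ne_zero)).mp hg)
        refine ⟨v₁ + v₂, ?_, ?_⟩
        · have e₁ : aeval f g v₁ = 0 := by
            rw [hgeq, mul_comm]; exact aux_kill_mul f hv₁0 q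
          have e₂ : aeval f g v₂ = 0 := by
            rw [hgeq]; exact aux_kill_mul f hv₂0 (p ^ k)
          rw [map_add, e₁, e₂, add_zero]
        · intro h hh
          have hkill1 : aeval f (h * q) v₁ = 0 := by
            have hx : aeval f (h * q) (v₁ + v₂) = 0 := by
              rw [mul_comm, map_mul, Module.End.mul_apply, hh, map_zero]
            have hx2 : aeval f (h * q) v₂ = 0 := aux_kill_mul f hv₂0 h
            rw [map_add, hx2, add_zero] at hx
            exact hx
          have hkill2 : aeval f (h * p ^ k) v₂ = 0 := by
            have hx : aeval f (h * p ^ k) (v₁ + v₂) = 0 := by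
              rw [mul_comm, map_mul, Module.End.mul_apply, hh, map_zero]
            have hx1 : aeval f (h * p ^ k) v₁ = 0 := aux_kill_mul f hv₁0 h
            rw [map_add, hx1, zero_add] at hx
            exact hx
          have d1 : p ^ k ∣ h := hcop.dvd_of_dvd_mul_right (hv₁ _ hkill1)
          have d2 : q ∣ h := hcop.symm.dvd_of_dvd_mul_right (hv₂ _ hkill2)
          rw [hgeq]
          exact hcop.mul_dvd d1 d2

private lemma aux_charpoly_blockDiagonal {R : Type*} [CommRing R] {p o : Type*} [Fintype p]
    [Fintype o] [DecidableEq p] [DecidableEq o] (M : o → Matrix p p R) :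
    (Matrix.blockDiagonal M).charpoly = ∏ k : o, (M k).charpoly := by
  unfold Matrix.charpoly
  rw [← Matrix.det_blockDiagonal]
  congr 1
  ext ⟨i, k⟩ ⟨j, k'⟩
  by_cases hk : k = k'
  · subst hk
    by_cases hij : i = j
    · subst hij
      rw [Matrix.charmatrix_apply_eq, Matrix.blockDiagonal_apply_eq,
        Matrix.blockDiagonal_apply_eq, Matrix.charmatrix_apply_eq]
    · have hne : ((i, k) : p × o) ≠ (j, k) := by simp [hij]
      rw [Matrix.charmatrix_apply_ne _ _ _ hne, Matrix.blockDiagonal_apply_eq,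
        Matrix.blockDiagonal_apply_eq, Matrix.charmatrix_apply_ne _ _ _ hij]
  · have hne : ((i, k) : p × o) ≠ (j, k') := by simp [hk]
    rw [Matrix.charmatrix_apply_ne _ _ _ hne, Matrix.blockDiagonal_apply_ne _ _ _ hk,
      Matrix.blockDiagonal_apply_ne _ _ _ hk, map_zero, neg_zero]

end AuxCyclic

set_option synthInstance.maxHeartbeats 1000000 in
set_option maxHeartbeats 2000000 in
theorem charpoly_mul_semilinear_eq_pow
    (K H : Type) [Field K] [Field H] [Algebra K H] [FiniteDimensional K H]
    (n : ℕ) (hn : n = Module.finrank K H)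
    (σ : H ≃ₐ[K] H) (e : ℕ) (he : orderOf σ = e)
    (c : H) (hc : c ≠ 0)
    (N : K) (hN : algebraMap K H N = ∏ i ∈ Finset.range e, (σ ^ i) c) :
    e ∣ n ∧
      LinearMap.charpoly ((LinearMap.mulLeft K c).comp (σ.toLinearMap : H →ₗ[K] H)) =
        (Polynomial.X ^ e - Polynomial.C N) ^ (n / e) := by
  classical
  have epos : 0 < e := he ▸ orderOf_pos σ
  set G : Subgroup (H ≃ₐ[K] H) := Subgroup.zpowers σ with hG
  set F : IntermediateField K H := IntermediateField.fixedField G with hF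
  have hσmem : σ ∈ G := Subgroup.mem_zpowers σ
  have hFfix : ∀ f : F, σ (f : H) = (f : H) := by
    intro f
    have := f.2 ⟨σ, hσmem⟩
    exact this
  have hfinrank : Module.finrank F H = e := by
    rw [hF, IntermediateField.finrank_fixedField_eq_card]
    simp only [hG]
    rw [Nat.card_zpowers, he]
  have hm : n = Module.finrank K F * e := by
    rw [hn, ← hfinrank, Module.finrank_mul_finrank]
  set m := Module.finrank K F with hmdef
  have hdvd : e ∣ n := ⟨m, by rw [hm, Nat.mul_comm]⟩
  have hne : n / e = m := by rw [hm, Nat.mul_div_cancel _ epos]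
  have mpos : 0 < m := Module.finrank_pos
  -- τ : the map x ↦ c σ(x), as an F-linear endomorphism
  set τ : Module.End F H :=
    { toFun := fun x => c * σ x
      map_add' := fun x y => by simp [map_add, mul_add]
      map_smul' := fun f x => by
        simp only [RingHom.id_apply]
        rw [Algebra.smul_def, Algebra.smul_def, map_mul, IntermediateField.algebraMap_apply,
          hFfix f]
        ring } with hτ
  have hτapp : ∀ x, τ x = c * σ x := fun _ => rfl
  have hpow : ∀ (i : ℕ) (x : H),
      (τ ^ i) x = (∏ j ∈ Finset.range i, (σ ^ j) c) * (σ ^ i) x := by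
    intro i
    induction i with
    | zero => intro x; simp
    | succ i ihp =>
      intro x
      rw [pow_succ', Module.End.mul_apply, ihp, hτapp, map_mul, map_prod,
        Finset.prod_range_succ']
      simp only [← AlgEquiv.mul_apply, ← pow_succ']
      simp only [pow_zero, AlgEquiv.one_apply]
      ring
  set NF : F := algebraMap K F N with hNFdef
  have hNFH : (algebraMap F H) NF = algebraMap K H N := (IsScalarTower.algebraMap_apply K F H N).symm
  set gF : Polynomial F := X ^ e - C NF with hgF
  have hgFmonic : gF.Monic := monic_X_pow_sub_C NF epos.ne'
  have hgFdeg : gF.natDegree = e := by rw [hgF]; exact natDegree_X_pow_sub_C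
  haveI : FiniteDimensional F H := FiniteDimensional.right K F H
  have hτe : ∀ x, (τ ^ e) x = NF • x := by
    intro x
    rw [hpow e x, ← hN]
    have hσe : ((σ : H ≃ₐ[K] H) ^ e) x = x := by
      rw [← he, pow_orderOf_eq_one]; rfl
    rw [hσe, Algebra.smul_def, hNFH]
  have haevalgF : Polynomial.aeval τ gF = 0 := by
    rw [hgF, map_sub, Polynomial.aeval_X_pow, Polynomial.aeval_C]
    ext x
    simp only [LinearMap.sub_apply, LinearMap.zero_apply, hτe x, Module.algebraMap_end_apply,
      sub_self]
  have hded : ∀ h : Polynomial F, h.natDegree < e → Polynomial.aeval τ h = 0 → h = 0 := by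
    intro h hdeg hkill
    set chars : Fin e → (H →* H) := fun i => ((σ ^ (i : ℕ) : H ≃ₐ[K] H) : H →* H) with hchars
    have hinj : Function.Injective chars := by
      intro i j hij
      have hh : (σ ^ (i : ℕ) : H ≃ₐ[K] H) = σ ^ (j : ℕ) := by
        ext x; exact DFunLike.congr_fun hij x
      have := pow_injOn_Iio_orderOf (by simp only [Set.mem_Iio, he]; exact i.2)
        (by simp only [Set.mem_Iio, he]; exact j.2) hh
      exact Fin.ext this
    have hli := (linearIndependent_monoidHom H H).comp chars hinj
    set a : Fin e → H := fun i =>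
      algebraMap F H (h.coeff (i : ℕ)) * ∏ j ∈ Finset.range (i : ℕ), (σ ^ j) c with ha
    have hsum : ∑ i : Fin e, a i • (fun f : H →* H => (f : H → H)) (chars i) = 0 := by
      funext x
      have hxx := DFunLike.congr_fun hkill x
      rw [Polynomial.aeval_eq_sum_range' (lt_of_lt_of_le hdeg le_rfl)] at hxx
      rw [← Fin.sum_univ_eq_sum_range (fun k => h.coeff k • (τ ^ k))] at hxx
      simp only [LinearMap.coe_sum, Finset.sum_apply, LinearMap.smul_apply,
        LinearMap.zero_apply] at hxx
      simp only [Finset.sum_apply, Pi.smul_apply, smul_eq_mul, Pi.zero_apply]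
      rw [← hxx]
      congr 1
      funext i
      rw [hpow (i : ℕ) x, Algebra.smul_def, IntermediateField.algebraMap_apply]
      simp only [ha, hchars, IntermediateField.algebraMap_apply, MonoidHom.coe_coe]
      ring
    have hazero := Fintype.linearIndependent_iff.mp hli a (by
      simpa [Function.comp] using hsum)
    have hcoeff : ∀ i : Fin e, h.coeff (i : ℕ) = 0 := by
      intro i
      have := hazero i
      rw [ha] at this
      have hprod : (∏ j ∈ Finset.range (i : ℕ), (σ ^ j) c) ≠ 0 :=
        Finset.prod_ne_zero_iff.mpr fun j _ hz => hc ((σ ^ j).injective (by rw [hz, map_zero]))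
      have hmap : algebraMap F H (h.coeff (i : ℕ)) = 0 := by
        rcases mul_eq_zero.mp this with h' | h'
        · exact h'
        · exact absurd h' hprod
      exact (map_eq_zero_iff _ (algebraMap F H).injective).mp hmap
    ext k
    rcases lt_or_ge k e with hk | hk
    · simpa using hcoeff ⟨k, hk⟩
    · simp [Polynomial.coeff_eq_zero_of_natDegree_lt (lt_of_lt_of_le hdeg hk)]
  have hint : IsIntegral F τ := .of_finite F τ
  have hmin : minpoly F τ = gF := by
    have hdvd1 : minpoly F τ ∣ gF := minpoly.dvd F τ haevalgF
    have hmu : (minpoly F τ).Monic := minpoly.monic hint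
    have hge : e ≤ (minpoly F τ).natDegree := by
      by_contra hlt
      push_neg at hlt
      exact hmu.ne_zero (hded _ hlt (minpoly.aeval F τ))
    obtain ⟨s, hs⟩ := hdvd1
    have hsne : s ≠ 0 := by
      rintro rfl; rw [mul_zero] at hs; exact hgFmonic.ne_zero hs
    have hdegs : s.natDegree = 0 := by
      have h1 := hgFdeg
      rw [hs, Polynomial.natDegree_mul hmu.ne_zero hsne] at h1
      omega
    have hsmonic : s.Monic := by
      have h2 := hgFmonic
      rw [hs] at h2
      exact hmu.of_mul_monic_left h2
    have hs1 : s = 1 := hsmonic.natDegree_eq_zero.mp hdegs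
    rw [hs, hs1, mul_one]
  obtain ⟨v, hv0, hv⟩ := aux_cyclic_rel τ e gF 1 (le_of_eq hgFdeg) hgFmonic
    (fun x => by rw [mul_one, haevalgF]; rfl)
    (fun h hh => by
      rw [← hmin]
      exact minpoly.dvd F τ (LinearMap.ext fun x => by rw [← mul_one h]; exact hh x))
  -- F-linear independence of the τ-orbit of the cyclic vector v
  have hFli : LinearIndependent F (fun i : Fin e => (τ ^ (i : ℕ)) v) := by
    refine Fintype.linearIndependent_iff.mpr fun f hf => ?_
    set h : Polynomial F := ∑ i : Fin e, Polynomial.monomial (i : ℕ) (f i) with hh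
    have hcoeff : ∀ i : Fin e, h.coeff (i : ℕ) = f i := by
      intro i
      rw [hh, Polynomial.finset_sum_coeff]
      rw [Finset.sum_eq_single i]
      · simp
      · intro j _ hji
        have hne : (j : ℕ) ≠ (i : ℕ) := fun hji' => hji (Fin.ext hji')
        simp [Polynomial.coeff_monomial, hne]
      · simp
    have hkill : (Polynomial.aeval τ h) v = 0 := by
      rw [hh, map_sum]
      rw [LinearMap.sum_apply]
      rw [← hf]
      refine Finset.sum_congr rfl fun i _ => ?_
      rw [Polynomial.aeval_monomial, Module.End.mul_apply, Module.algebraMap_end_apply]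
    have hdvd2 : gF ∣ h := hv _ hkill
    have hzero : h = 0 := by
      by_contra hne0
      have hle := Polynomial.natDegree_le_of_dvd hdvd2 hne0
      have hub : h.natDegree ≤ e - 1 := by
        rw [hh]
        refine Polynomial.natDegree_sum_le_of_forall_le _ _ fun i _ => ?_
        exact le_trans (Polynomial.natDegree_monomial_le (f i)) (by omega)
      rw [hgFdeg] at hle
      omega
    intro i
    rw [← hcoeff i, hzero, Polynomial.coeff_zero]
  -- a K-basis of H adapted to τ
  set b : Module.Basis (Fin m) K F := Module.finBasis K F with hb
  set u : Fin e × Fin m → H := fun p => (b p.2 : F) • ((τ ^ (p.1 : ℕ)) v) with hu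
  have hKli : LinearIndependent K u := by
    refine Fintype.linearIndependent_iff.mpr fun a ha => ?_
    rw [Fintype.sum_prod_type] at ha
    have ha' : ∑ i : Fin e, (∑ j : Fin m, a (i, j) • b j) • ((τ ^ (i : ℕ)) v) = 0 := by
      rw [← ha]
      refine Finset.sum_congr rfl fun i _ => ?_
      rw [Finset.sum_smul]
      refine Finset.sum_congr rfl fun j _ => ?_
      exact smul_assoc (a (i, j)) (b j) ((τ ^ (i : ℕ)) v)
    have hFi := Fintype.linearIndependent_iff.mp hFli _ ha'
    rintro ⟨i, j⟩
    exact Fintype.linearIndependent_iff.mp b.linearIndependent _ (hFi i) j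
  haveI : Nonempty (Fin e × Fin m) := ⟨(⟨0, epos⟩, ⟨0, mpos⟩)⟩
  have hcard : Fintype.card (Fin e × Fin m) = Module.finrank K H := by
    rw [Fintype.card_prod, Fintype.card_fin, Fintype.card_fin, ← hn, hm]
    ring
  set w : Module.Basis (Fin e × Fin m) K H := basisOfLinearIndependentOfCardEqFinrank hKli hcard with hw
  have hwu : ∀ p, w p = u p := fun p => by
    rw [hw, coe_basisOfLinearIndependentOfCardEqFinrank]
  -- the action of the map on the basis
  have hstep : ∀ (i : Fin e) (j : Fin m),
      ((LinearMap.mulLeft K c).comp (σ.toLinearMap : H →ₗ[K] H)) (u (i, j)) =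
        if hip : (i : ℕ) + 1 < e then u (⟨(i : ℕ) + 1, hip⟩, j)
        else N • u (⟨0, epos⟩, j) := by
    intro i j
    have h1 : ((LinearMap.mulLeft K c).comp (σ.toLinearMap : H →ₗ[K] H)) (u (i, j))
        = τ (u (i, j)) := rfl
    rw [h1, hu, map_smul, ← Module.End.mul_apply, ← pow_succ']
    by_cases hip : (i : ℕ) + 1 < e
    · rw [dif_pos hip]
    · rw [dif_neg hip]
      have hie : (i : ℕ) + 1 = e := by have := i.2; omega
      rw [hie, hτe v]
      show (b j : F) • NF • v = N • ((b j : F) • (τ ^ (0 : ℕ)) v)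
      rw [pow_zero, Module.End.one_apply, smul_comm, hNFdef, algebraMap_smul]
  -- the block-diagonal companion matrix
  set Cm : Matrix (Fin e) (Fin e) K := fun i' i =>
    if (i : ℕ) + 1 = (i' : ℕ) then 1 else if (i : ℕ) + 1 = e ∧ (i' : ℕ) = 0 then N else 0
    with hCm
  have hmat : LinearMap.toMatrix w w ((LinearMap.mulLeft K c).comp (σ.toLinearMap : H →ₗ[K] H))
      = Matrix.blockDiagonal (fun _ : Fin m => Cm) := by
    ext ⟨i', j'⟩ ⟨i, j⟩
    rw [LinearMap.toMatrix_apply, hwu (i, j), hstep i j, Matrix.blockDiagonal_apply]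
    by_cases hip : (i : ℕ) + 1 < e
    · rw [dif_pos hip, ← hwu, Module.Basis.repr_self, Finsupp.single_apply]
      have hc2 : ¬((i : ℕ) + 1 = e ∧ (i' : ℕ) = 0) := by omega
      by_cases hjj : j = j'
      · subst hjj
        by_cases hii : (i : ℕ) + 1 = (i' : ℕ)
        · simp [hCm, Prod.ext_iff, Fin.ext_iff, hii, hc2]
        · simp [hCm, Prod.ext_iff, Fin.ext_iff, hii, hc2]
      · simp [hCm, Prod.ext_iff, Fin.ext_iff, hjj, Ne.symm hjj]
    · have hie : (i : ℕ) + 1 = e := by have := i.2; omega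
      rw [dif_neg hip, ← hwu, map_smul, Module.Basis.repr_self, Finsupp.smul_apply,
        Finsupp.single_apply]
      have hc1 : ¬((i : ℕ) + 1 = (i' : ℕ)) := by have := i'.2; omega
      have hei' : ¬(e = (i' : ℕ)) := by have := i'.2; omega
      by_cases hjj : j = j'
      · subst hjj
        by_cases hii : (i' : ℕ) = 0
        · simp [hCm, Prod.ext_iff, Fin.ext_iff, hii, hc1, hie, hei', epos.ne']
        · simp [hCm, Prod.ext_iff, Fin.ext_iff, hii, hc1, hie, hei']
          exact fun h => absurd h.symm hii
      · simp [hCm, Prod.ext_iff, Fin.ext_iff, hjj, Ne.symm hjj]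
  -- identify the block with multiplication by the root on K[X]/(X^e - N)
  set gK : Polynomial K := X ^ e - C N with hgK
  have hgKmonic : gK.Monic := monic_X_pow_sub_C N epos.ne'
  have hgKdeg : gK.natDegree = e := by rw [hgK]; exact natDegree_X_pow_sub_C
  set pb : PowerBasis K (AdjoinRoot gK) := AdjoinRoot.powerBasis' hgKmonic with hpb
  have hpbdim : pb.dim = e := by rw [hpb, AdjoinRoot.powerBasis'_dim, hgKdeg]
  set pbb : Module.Basis (Fin e) K (AdjoinRoot gK) := pb.basis.reindex (finCongr hpbdim) with hpbb
  have hpbbi : ∀ k : Fin e, pbb k = AdjoinRoot.root gK ^ (k : ℕ) := by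
    intro k
    rw [hpbb, Module.Basis.reindex_apply, PowerBasis.coe_basis]
    show pb.gen ^ (((finCongr hpbdim).symm k : Fin pb.dim) : ℕ) = _
    rw [show pb.gen = AdjoinRoot.root gK from AdjoinRoot.powerBasis'_gen hgKmonic]
    congr 1
  have hroot : AdjoinRoot.root gK ^ e = algebraMap K (AdjoinRoot gK) N := by
    have h0 : Polynomial.aeval (AdjoinRoot.root gK) gK = 0 := by
      rw [AdjoinRoot.aeval_eq, AdjoinRoot.mk_self]
    rw [hgK, map_sub, Polynomial.aeval_X_pow, Polynomial.aeval_C, sub_eq_zero] at h0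
    exact h0
  set L : Module.End K (AdjoinRoot gK) :=
    (Algebra.lmul K (AdjoinRoot gK)) (AdjoinRoot.root gK) with hL
  have hmat2 : LinearMap.toMatrix pbb pbb L = Cm := by
    ext i' i
    rw [LinearMap.toMatrix_apply, hpbbi i, hL]
    have hLi : (Algebra.lmul K (AdjoinRoot gK)) (AdjoinRoot.root gK)
        (AdjoinRoot.root gK ^ (i : ℕ)) = AdjoinRoot.root gK ^ ((i : ℕ) + 1) := by
      rw [pow_succ']
      rfl
    rw [hLi]
    by_cases hip : (i : ℕ) + 1 < e
    · rw [show AdjoinRoot.root gK ^ ((i : ℕ) + 1) = pbb ⟨(i : ℕ) + 1, hip⟩ from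
        (hpbbi ⟨(i : ℕ) + 1, hip⟩).symm, Module.Basis.repr_self, Finsupp.single_apply]
      have hc2 : ¬((i : ℕ) + 1 = e ∧ (i' : ℕ) = 0) := by omega
      by_cases hii : (i : ℕ) + 1 = (i' : ℕ)
      · simp [hCm, Fin.ext_iff, hii, hc2]
      · simp [hCm, Fin.ext_iff, hii, hc2]
    · have hie : (i : ℕ) + 1 = e := by have := i.2; omega
      rw [hie, hroot]
      have halg : algebraMap K (AdjoinRoot gK) N = N • pbb ⟨0, epos⟩ := by
        rw [hpbbi, pow_zero, Algebra.algebraMap_eq_smul_one]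
      rw [halg, map_smul, Module.Basis.repr_self, Finsupp.smul_apply, Finsupp.single_apply]
      have hc1 : ¬((i : ℕ) + 1 = (i' : ℕ)) := by have := i'.2; omega
      have hei' : ¬(e = (i' : ℕ)) := by have := i'.2; omega
      by_cases hii : (i' : ℕ) = 0
      · simp [hCm, Fin.ext_iff, hii, hc1, hie, hei', epos.ne']
      · simp [hCm, Fin.ext_iff, hii, hc1, hie, hei']
        exact fun h => absurd h.symm hii
  haveI : Module.Finite K (AdjoinRoot gK) := Module.Finite.of_basis pb.basis
  have hCmcharpoly : Cm.charpoly = gK := by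
    rw [← hmat2, LinearMap.charpoly_toMatrix]
    rw [← LinearMap.charpoly_toMatrix L pb.basis, ← Algebra.leftMulMatrix_apply,
      ← AdjoinRoot.powerBasis'_gen hgKmonic, ← hpb, _root_.charpoly_leftMulMatrix]
    rw [hpb, AdjoinRoot.powerBasis'_gen, AdjoinRoot.minpoly_root hgKmonic.ne_zero,
      hgKmonic.leadingCoeff, inv_one, map_one, mul_one]
  refine ⟨hdvd, ?_⟩
  rw [← LinearMap.charpoly_toMatrix ((LinearMap.mulLeft K c).comp
    (σ.toLinearMap : H →ₗ[K] H)) w, hmat, aux_charpoly_blockDiagonal, Finset.prod_const,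
    Finset.card_univ, Fintype.card_fin, hCmcharpoly, hgK, hne]
end

section
/- Let A be a Dedekind domain with fraction field K, let L be a field extension of K, and let V be an L-vector space of finite dimension n ≥ 1. Call an A-submodule M ⊆ V an A-lattice if M is finitely generated, M spans V as an L-vector space, and the K-subspace of V spanned by M has dimension n over K. Then for any two A-lattices M and N in V there exists an L-linear automorphism σ of V with σ(M) ⊆ N. If moreover M and N are isomorphic as A-modules, then σ can be chosen so that σ(M) = N. -/
/-!
Let `A` be a Dedekind domain with fraction field `K`, `L` a field extension of `K`, and `V`
an `L`-vector space of finite dimension `n ≥ 1`.  An `A`-lattice in `V` is a finitely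
generated `A`-submodule spanning `V` over `L` whose `K`-span has dimension `n` over `K`.
For any two `A`-lattices `M`, `N` there is an `L`-linear automorphism `σ` of `V` with
`σ(M) ⊆ N`; if moreover `M ≃ N` as `A`-modules, `σ` can be chosen with `σ(M) = N`.
-/

/-- Clearing denominators: an element of the `K`-span of a set lies in the `A`-span
after multiplication by a nonzero element of `A`. -/
theorem aux_clear_denom {A : Type} [CommRing A] [IsDomain A]
    {K : Type} [Field K] [Algebra A K] [IsFractionRing A K]
    {V : Type} [AddCommGroup V] [Module K V] [Module A V] [IsScalarTower A K V]
    (s : Set V) (x : V) (hx : x ∈ Submodule.span K s) :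
    ∃ a : A, a ≠ 0 ∧ a • x ∈ Submodule.span A s := by
  induction hx using Submodule.span_induction with
  | mem y hy => exact ⟨1, one_ne_zero, by simpa using Submodule.subset_span hy⟩
  | zero => exact ⟨1, one_ne_zero, by simp⟩
  | add y z hy hz ihy ihz =>
      obtain ⟨a, ha, hay⟩ := ihy
      obtain ⟨b, hb, hbz⟩ := ihz
      refine ⟨a * b, mul_ne_zero ha hb, ?_⟩
      have h1 : (a * b) • y = b • (a • y) := by rw [mul_comm, mul_smul]
      have h2 : (a * b) • z = a • (b • z) := by rw [mul_smul]
      rw [smul_add, h1, h2]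
      exact Submodule.add_mem _ (Submodule.smul_mem _ _ hay) (Submodule.smul_mem _ _ hbz)
  | smul k y hy ihy =>
      obtain ⟨a, ha, hay⟩ := ihy
      obtain ⟨⟨c, b⟩, hcb⟩ := IsLocalization.surj (nonZeroDivisors A) k
      refine ⟨(b : A) * a, mul_ne_zero (nonZeroDivisors.coe_ne_zero b) ha, ?_⟩
      have key : ((b : A) * a) • (k • y) = (c * a) • y := by
        rw [← IsScalarTower.algebraMap_smul K ((b : A) * a) (k • y), smul_smul,
          ← IsScalarTower.algebraMap_smul K (c * a) y, map_mul, map_mul]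
        congr 1
        rw [← hcb]; ring
      rw [key, mul_smul]
      exact Submodule.smul_mem _ _ hay

/-- Clearing denominators for a finitely generated submodule contained in a `K`-span. -/
theorem aux_clear_denom_fg {A : Type} [CommRing A] [IsDomain A]
    {K : Type} [Field K] [Algebra A K] [IsFractionRing A K]
    {V : Type} [AddCommGroup V] [Module K V] [Module A V] [IsScalarTower A K V]
    (s : Set V) (P : Submodule A V) (hP : P.FG)
    (hPs : (P : Set V) ⊆ (Submodule.span K s : Set V)) :
    ∃ a : A, a ≠ 0 ∧ ∀ x ∈ P, a • x ∈ Submodule.span A s := by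
  classical
  obtain ⟨t, rfl⟩ := hP
  have h : ∀ x ∈ t, ∃ a : A, a ≠ 0 ∧ a • x ∈ Submodule.span A s := fun x hx =>
    aux_clear_denom s x (hPs (Submodule.subset_span hx))
  choose! f hf1 hf2 using h
  refine ⟨∏ x ∈ t, f x, Finset.prod_ne_zero_iff.2 fun x hx => hf1 x hx, ?_⟩
  have hle : Submodule.span A (t : Set V) ≤
      (Submodule.span A s).comap (LinearMap.lsmul A V (∏ x ∈ t, f x)) := by
    rw [Submodule.span_le]
    intro y hy
    have hy' : y ∈ t := hy
    simp only [Set.mem_setOf_eq, SetLike.mem_coe, Submodule.mem_comap, LinearMap.lsmul_apply]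
    have he : (∏ x ∈ t, f x) • y = (∏ x ∈ t.erase y, f x) • (f y • y) := by
      rw [smul_smul, ← Finset.mul_prod_erase t f hy', mul_comm]
    rw [he]
    exact Submodule.smul_mem _ _ (hf2 y hy')
  intro x hx
  exact hle hx

/-- From a lattice one can extract `n` elements which `K`-span the same subspace as the
lattice and form an `L`-basis of `V`. -/
theorem aux_lattice_basis {A K L V : Type} [CommRing A] [Field K] [Field L]
    [Algebra K L] [AddCommGroup V] [Module L V] [Module K V] [Module A V]
    [IsScalarTower K L V]
    {n : ℕ} (hn : Module.finrank L V = n) (hn1 : 1 ≤ n)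
    (M : Submodule A V)
    (hMspanL : Submodule.span L (M : Set V) = ⊤)
    (hMrankK : Module.finrank K (Submodule.span K (M : Set V)) = n) :
    ∃ (e : Fin n → V) (b : Module.Basis (Fin n) L V),
      (∀ i, e i ∈ M) ∧ Submodule.span K (Set.range e) = Submodule.span K (M : Set V) ∧
      ⇑b = e := by
  classical
  obtain ⟨s, hsM, hspan, hli⟩ := exists_linearIndependent K (M : Set V)
  set W := Submodule.span K (M : Set V) with hW
  haveI : FiniteDimensional K W := Module.finite_of_finrank_pos (by omega)
  have hsW : ∀ x : s, (x : V) ∈ W := fun x => hspan ▸ Submodule.subset_span x.2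
  have hc : LinearIndependent K (fun x : s => (⟨x, hsW x⟩ : W)) := by
    apply LinearIndependent.of_comp W.subtype
    exact hli
  have hcard : Cardinal.mk s ≤ (n : Cardinal) := by
    have h1 := hc.cardinal_le_rank
    rwa [← Module.finrank_eq_rank, hMrankK] at h1
  have hsfin : s.Finite :=
    Cardinal.lt_aleph0_iff_set_finite.mp (hcard.trans_lt (Cardinal.nat_lt_aleph0 n))
  haveI := hsfin.fintype
  have hcards : s.toFinset.card = n := by
    have h2 := finrank_span_set_eq_card hli
    rw [hspan, hMrankK] at h2
    omega
  have hcardn : Fintype.card s = n := by rw [← Set.toFinset_card]; exact hcards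
  obtain g : Fin n ≃ s := (Fintype.equivFinOfCardEq hcardn).symm
  set e : Fin n → V := fun i => (g i : V) with he
  have hrange : Set.range e = s := by
    have h3 : Set.range e = Subtype.val '' Set.range g := Set.range_comp _ _
    rw [h3, Equiv.range_eq_univ, Set.image_univ, Subtype.range_coe]
  have heM : ∀ i, e i ∈ M := fun i => hsM (g i).2
  have hspanKe : Submodule.span K (Set.range e) = W := by rw [hrange, hspan]
  have htop : ⊤ ≤ Submodule.span L (Set.range e) := by
    rw [← hMspanL]
    apply Submodule.span_le.2
    intro m hm
    have hmW : m ∈ Submodule.span K (Set.range e) := by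
      rw [hspanKe]; exact Submodule.subset_span hm
    exact Submodule.span_subset_span K L _ hmW
  have hcardF : Fintype.card (Fin n) = Module.finrank L V := by simp [hn]
  exact ⟨e, basisOfTopLeSpanOfCardEqFinrank e htop hcardF, heM, hspanKe,
    coe_basisOfTopLeSpanOfCardEqFinrank e htop hcardF⟩

theorem exists_linear_auto_maps_lattice_into_lattice
    (A : Type) [CommRing A] [IsDomain A] [IsDedekindDomain A]
    (K : Type) [Field K] [Algebra A K] [IsFractionRing A K]
    (L : Type) [Field L] [Algebra K L] [Algebra A L] [IsScalarTower A K L]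
    (V : Type) [AddCommGroup V]
    [Module L V] [Module K V] [Module A V]
    [IsScalarTower K L V] [IsScalarTower A K V] [IsScalarTower A L V]
    (n : ℕ) (hn : Module.finrank L V = n) (hn1 : 1 ≤ n)
    (M N : Submodule A V)
    (hMfg : M.FG) (hNfg : N.FG)
    (hMspanL : Submodule.span L (M : Set V) = ⊤)
    (hNspanL : Submodule.span L (N : Set V) = ⊤)
    (hMrankK : Module.finrank K (Submodule.span K (M : Set V)) = n)
    (hNrankK : Module.finrank K (Submodule.span K (N : Set V)) = n) :
    (∃ σ : V ≃ₗ[L] V,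
        Submodule.map (((σ : V →ₗ[L] V)).restrictScalars A) M ≤ N) ∧
    (Nonempty (M ≃ₗ[A] N) →
      ∃ σ : V ≃ₗ[L] V,
        Submodule.map (((σ : V →ₗ[L] V)).restrictScalars A) M = N) := by
  classical
  haveI : FiniteDimensional L V := Module.finite_of_finrank_pos (by omega)
  have hALinj : Function.Injective (algebraMap A L) := by
    rw [IsScalarTower.algebraMap_eq A K L]
    exact (algebraMap K L).injective.comp (IsFractionRing.injective A K)
  have haL : ∀ a : A, a ≠ 0 → (algebraMap A L a) ≠ 0 := fun a ha h =>
    ha (hALinj (by rw [h, map_zero]))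
  obtain ⟨e, be, heM, hspanKe, hbe⟩ := aux_lattice_basis hn hn1 M hMspanL hMrankK
  obtain ⟨f, bf, hfN, hspanKf, hbf⟩ := aux_lattice_basis hn hn1 N hNspanL hNrankK
  have hNspanA : Submodule.span A (Set.range f) ≤ N :=
    Submodule.span_le.2 (Set.range_subset_iff.2 hfN)
  constructor
  · -- Part 1
    set σ₀ : V ≃ₗ[L] V := be.equiv bf (Equiv.refl _) with hσ₀
    have hσ₀e : ∀ i, σ₀ (e i) = f i := by
      intro i
      rw [← congrFun hbe i, ← congrFun hbf i]
      exact be.equiv_apply i bf (Equiv.refl _)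
    have hmap : ∀ m ∈ M, (σ₀ : V →ₗ[L] V) m ∈ Submodule.span K (Set.range f) := by
      intro m hm
      have hmW : m ∈ Submodule.span K (Set.range e) := by
        rw [hspanKe]; exact Submodule.subset_span hm
      have himg : Submodule.map ((σ₀ : V →ₗ[L] V).restrictScalars K)
          (Submodule.span K (Set.range e)) = Submodule.span K (Set.range f) := by
        have himg2 : ⇑((σ₀ : V →ₗ[L] V).restrictScalars K) '' Set.range e = Set.range f := by
          rw [← Set.range_comp]
          exact congrArg Set.range (funext fun i => hσ₀e i)
        rw [Submodule.map_span, himg2]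
      rw [← himg]
      exact ⟨m, hmW, rfl⟩
    have hPfg : (Submodule.map ((σ₀ : V →ₗ[L] V).restrictScalars A) M).FG :=
      Submodule.FG.map _ hMfg
    have hPle : ((Submodule.map ((σ₀ : V →ₗ[L] V).restrictScalars A) M : Submodule A V) : Set V)
        ⊆ (Submodule.span K (Set.range f) : Set V) := by
      rintro x hx
      obtain ⟨m, hm, rfl⟩ := hx
      exact hmap m hm
    obtain ⟨a, ha, hax⟩ := aux_clear_denom_fg (K := K) (Set.range f) _ hPfg hPle
    refine ⟨σ₀.trans (LinearEquiv.smulOfNeZero L V _ (haL a ha)), ?_⟩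
    rintro x hx
    obtain ⟨m, hm, rfl⟩ := hx
    have hval : ((σ₀.trans (LinearEquiv.smulOfNeZero L V _ (haL a ha)) : V →ₗ[L] V).restrictScalars A) m
        = a • ((σ₀ : V →ₗ[L] V) m) := by
      show (algebraMap A L a) • ((σ₀ : V →ₗ[L] V) m) = a • ((σ₀ : V →ₗ[L] V) m)
      rw [algebraMap_smul]
    rw [hval]
    exact hNspanA (hax _ ⟨m, hm, rfl⟩)
  · -- Part 2
    rintro ⟨φ⟩
    set g : M →ₗ[A] V := N.subtype.comp (φ : M →ₗ[A] N) with hg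
    set σ₀ : V →ₗ[L] V := be.constr L fun i => g ⟨e i, heM i⟩ with hσ₀
    have step_a : ∀ x ∈ Submodule.span A (Set.range e),
        ∃ hx : x ∈ M, σ₀ x = g ⟨x, hx⟩ := by
      intro x hx
      induction hx using Submodule.span_induction with
      | mem y hy =>
          obtain ⟨i, rfl⟩ := hy
          refine ⟨heM i, ?_⟩
          have hei : be i = e i := congrFun hbe i
          conv_lhs => rw [← hei]
          exact be.constr_basis L _ i
      | zero =>
          refine ⟨M.zero_mem, ?_⟩
          have h0 : (⟨(0 : V), M.zero_mem⟩ : M) = 0 := rfl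
          rw [map_zero, h0, map_zero]
      | add y z hy hz ihy ihz =>
          obtain ⟨hyM, hy'⟩ := ihy
          obtain ⟨hzM, hz'⟩ := ihz
          refine ⟨M.add_mem hyM hzM, ?_⟩
          have hadd : (⟨y + z, M.add_mem hyM hzM⟩ : M) = ⟨y, hyM⟩ + ⟨z, hzM⟩ := rfl
          rw [map_add, hy', hz', hadd, map_add]
      | smul a y hy ihy =>
          obtain ⟨hyM, hy'⟩ := ihy
          refine ⟨M.smul_mem a hyM, ?_⟩
          have h1 : σ₀ (a • y) = a • σ₀ y := σ₀.map_smul_of_tower a y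
          have h2 : (⟨a • y, M.smul_mem a hyM⟩ : M) = a • ⟨y, hyM⟩ := rfl
          rw [h1, hy', h2, map_smul]
    have hkey : ∀ (m : V) (hm : m ∈ M), σ₀ m = g ⟨m, hm⟩ := by
      intro m hm
      have hmW : m ∈ Submodule.span K (Set.range e) := by
        rw [hspanKe]; exact Submodule.subset_span hm
      obtain ⟨a, ha, ham⟩ := aux_clear_denom (A := A) _ _ hmW
      obtain ⟨h1, h2⟩ := step_a _ ham
      have hinj : Function.Injective (fun v : V => algebraMap A L a • v) :=
        smul_right_injective V (haL a ha)
      apply hinj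
      show algebraMap A L a • σ₀ m = algebraMap A L a • g ⟨m, hm⟩
      rw [algebraMap_smul, algebraMap_smul]
      calc a • σ₀ m = σ₀ (a • m) := (σ₀.map_smul_of_tower a m).symm
        _ = g ⟨a • m, h1⟩ := h2
        _ = g (a • ⟨m, hm⟩) := rfl
        _ = a • g ⟨m, hm⟩ := map_smul g a _
    have hNrange : ∀ x ∈ N, ∃ m ∈ M, σ₀ m = x := by
      intro x hx
      refine ⟨(φ.symm ⟨x, hx⟩ : M), (φ.symm ⟨x, hx⟩).2, ?_⟩
      rw [hkey _ (φ.symm ⟨x, hx⟩).2]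
      show (N.subtype.comp (φ : M →ₗ[A] N)) ⟨(φ.symm ⟨x, hx⟩ : M), (φ.symm ⟨x, hx⟩).2⟩ = x
      have heta : (⟨(φ.symm ⟨x, hx⟩ : M), (φ.symm ⟨x, hx⟩).2⟩ : M) = φ.symm ⟨x, hx⟩ := rfl
      rw [heta]
      show ((φ (φ.symm ⟨x, hx⟩) : N) : V) = x
      rw [LinearEquiv.apply_symm_apply]
    have hsurj : Function.Surjective σ₀ := by
      rw [← LinearMap.range_eq_top, ← top_le_iff, ← hNspanL]
      apply Submodule.span_le.2
      intro x hx
      obtain ⟨m, hm, hσm⟩ := hNrange x hx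
      exact ⟨m, hσm⟩
    have hbij : Function.Bijective σ₀ :=
      ⟨LinearMap.injective_iff_surjective.2 hsurj, hsurj⟩
    refine ⟨LinearEquiv.ofBijective σ₀ hbij, ?_⟩
    apply le_antisymm
    · rintro x hx
      obtain ⟨m, hm, rfl⟩ := hx
      show σ₀ m ∈ N
      rw [hkey m hm]
      exact (φ ⟨m, hm⟩).2
    · intro x hx
      obtain ⟨m, hm, hσm⟩ := hNrange x hx
      exact ⟨m, hm, hσm⟩
end

section
/- Let p ∈ A be a monic irreducible polynomial, and let O_{E,(p)} denote the localization of O_E at the multiplicative set A∖(p). Then for every n ≥ 0, p^{q^n}·e_n ∈ p·O_{E,(p)}, where e_n are the exponential coefficients of the Drinfeld module ρ. -/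
/-!
Integrality of the exponential coefficients of a Drinfeld module: if `p ∈ A = Fq[θ]` is
monic irreducible and `O_{E,(p)}` denotes the localization of `O_E` at `A ∖ (p)`, then
`p^{q^n}·e_n ∈ p·O_{E,(p)}` for all `n ≥ 0`, where `e_n` are the exponential coefficients
of a Drinfeld module `ρ` of rank `r ≥ 1` over `O_E`, determined by
`ρ_θ = θ + a_1 τ + ⋯ + a_r τ^r`.
-/

noncomputable section

open Polynomial

variable (Fq : Type) [Field Fq] [Fintype Fq]
variable (E : Type) [Field E] [Algebra (RatFunc Fq) E]
  [FiniteDimensional (RatFunc Fq) E] [Algebra.IsSeparable (RatFunc Fq) E]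

/-- The `A = Fq[θ]`-algebra structure on `E`, through `K = Fq(θ)`. -/
local instance instAE : Algebra (Polynomial Fq) E :=
  ((algebraMap (RatFunc Fq) E).comp (algebraMap (Polynomial Fq) (RatFunc Fq))).toAlgebra

/-- `θ` as an element of `E`. -/
def thetaE : E := algebraMap (RatFunc Fq) E RatFunc.X

/-- The exponential coefficients `e_i ∈ E` of the Drinfeld module with
`ρ_θ = θ + a_1 τ + ⋯ + a_r τ^r`:  `e_0 = 1`, `e_j = 0` for `j < 0`, and
`(θ^{q^i} - θ) e_i = ∑_{l=1}^{r} a_l e_{i-l}^{q^l}` for `i ≥ 1`. -/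
def eCoeff (r : ℕ) (a : ℕ → integralClosure (Polynomial Fq) E) : ℕ → E
  | 0 => 1
  | (i + 1) =>
      (thetaE Fq E ^ (Fintype.card Fq) ^ (i + 1) - thetaE Fq E)⁻¹ *
        ∑ l ∈ Finset.Icc 1 r,
          if h : 1 ≤ l ∧ l ≤ i + 1 then
            (a l : E) * (eCoeff r a (i + 1 - l)) ^ (Fintype.card Fq) ^ l
          else 0
  decreasing_by omega

/-- `x ∈ p·O_{E,(p)}`: there are `u ∈ O_E` and `b ∈ A` with `p ∤ b` and `b·x = p·u`. -/
def MemPLocOE (p : Polynomial Fq) (x : E) : Prop :=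
  ∃ (u : integralClosure (Polynomial Fq) E) (b : Polynomial Fq), ¬ p ∣ b ∧
    algebraMap (Polynomial Fq) E b * x = algebraMap (Polynomial Fq) E p * (u : E)

lemma algebraMap_AE_injective : Function.Injective (algebraMap (Polynomial Fq) E) :=
  (algebraMap (RatFunc Fq) E).injective.comp (RatFunc.algebraMap_injective (K := Fq))

lemma thetaE_eq_algebraMap_X : thetaE Fq E = algebraMap (Polynomial Fq) E Polynomial.X :=
  (congrArg (algebraMap (RatFunc Fq) E) (RatFunc.algebraMap_X (K := Fq))).symm

lemma not_sq_dvd (p : Polynomial Fq) (hp : Irreducible p) (m : ℕ) (hm : m ≠ 0) :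
    ¬ p * p ∣ (Polynomial.X ^ (Fintype.card Fq) ^ m - Polynomial.X : Polynomial Fq) := by
  obtain ⟨p', hchar⟩ := CharP.exists Fq
  obtain ⟨k, hprime, hcard⟩ := FiniteField.card Fq p'
  have hdvd : p' ∣ (Fintype.card Fq) ^ m := by
    refine dvd_trans ?_ (dvd_pow_self _ hm)
    rw [hcard]
    exact dvd_pow_self p' k.2.ne'
  have hsq : Squarefree (Polynomial.X ^ (Fintype.card Fq) ^ m - Polynomial.X : Polynomial Fq) :=
    (galois_poly_separable p' _ hdvd).squarefree
  intro h
  exact hp.not_isUnit (hsq p h)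

theorem exp_coeff_integrality
    (r : ℕ) (hr : 1 ≤ r) (a : ℕ → integralClosure (Polynomial Fq) E) (ha : a r ≠ 0)
    (p : Polynomial Fq) (hp : Irreducible p) (hmonic : p.Monic) (n : ℕ) :
    MemPLocOE Fq E p
      (algebraMap (Polynomial Fq) E (p ^ (Fintype.card Fq) ^ n) * eCoeff Fq E r a n) := by
  classical
  have hq2 : 2 ≤ Fintype.card Fq := Fintype.one_lt_card
  induction n using Nat.strong_induction_on with
  | _ n IH =>
  unfold MemPLocOE
  cases n with
  | zero =>
    refine ⟨1, 1, fun h => hp.not_isUnit (isUnit_of_dvd_one h), ?_⟩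
    simp [eCoeff]
  | succ n =>
    -- choose data from the inductive hypothesis
    have hchoice : ∀ k : ℕ, ∃ (uu : integralClosure (Polynomial Fq) E) (bb : Polynomial Fq),
        ¬ p ∣ bb ∧ (k < n + 1 →
          algebraMap (Polynomial Fq) E bb *
            (algebraMap (Polynomial Fq) E (p ^ (Fintype.card Fq) ^ k) * eCoeff Fq E r a k)
            = algebraMap (Polynomial Fq) E p * uu) := by
      intro k
      by_cases hk : k < n + 1
      · obtain ⟨uu, bb, h1, h2⟩ := IH k hk
        exact ⟨uu, bb, h1, fun _ => h2⟩
      · exact ⟨0, 1, fun h => hp.not_isUnit (isUnit_of_dvd_one h), fun h => absurd h hk⟩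
    choose u b hb heq using hchoice
    -- the factor θ^{q^{n+1}} - θ
    have hfne : (Polynomial.X ^ (Fintype.card Fq) ^ (n + 1) - Polynomial.X : Polynomial Fq) ≠ 0 := by
      have h2 : 2 ≤ (Fintype.card Fq) ^ (n + 1) :=
        Nat.one_lt_pow (Nat.succ_ne_zero n) hq2
      refine sub_ne_zero.mpr fun h => ?_
      have h3 := congrArg Polynomial.natDegree h
      rw [Polynomial.natDegree_X_pow, Polynomial.natDegree_X] at h3
      omega
    obtain ⟨ε, c, hε1, hpc, hfc⟩ : ∃ (ε : ℕ) (c : Polynomial Fq), ε ≤ 1 ∧ ¬ p ∣ c ∧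
        (Polynomial.X ^ (Fintype.card Fq) ^ (n + 1) - Polynomial.X : Polynomial Fq)
          = p ^ ε * c := by
      by_cases hpf : p ∣ (Polynomial.X ^ (Fintype.card Fq) ^ (n + 1) - Polynomial.X : Polynomial Fq)
      · obtain ⟨c, hc⟩ := hpf
        refine ⟨1, c, le_refl 1, ?_, by rw [pow_one, hc]⟩
        rintro ⟨d, rfl⟩
        exact not_sq_dvd Fq p hp (n + 1) (Nat.succ_ne_zero n) ⟨d, by rw [hc]; ring⟩
      · exact ⟨0, _, Nat.zero_le 1, hpf, by rw [pow_zero, one_mul]⟩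
    have hfmap : thetaE Fq E ^ (Fintype.card Fq) ^ (n + 1) - thetaE Fq E
        = algebraMap (Polynomial Fq) E
            (Polynomial.X ^ (Fintype.card Fq) ^ (n + 1) - Polynomial.X) := by
      rw [map_sub, map_pow, ← thetaE_eq_algebraMap_X]
    have hfEne : thetaE Fq E ^ (Fintype.card Fq) ^ (n + 1) - thetaE Fq E ≠ 0 := by
      rw [hfmap]
      exact (map_ne_zero_iff _ (algebraMap_AE_injective Fq E)).mpr hfne
    have hrec : (thetaE Fq E ^ (Fintype.card Fq) ^ (n + 1) - thetaE Fq E) * eCoeff Fq E r a (n + 1)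
        = ∑ l ∈ Finset.Icc 1 r, if h : 1 ≤ l ∧ l ≤ n + 1 then
            (a l : E) * (eCoeff Fq E r a (n + 1 - l)) ^ (Fintype.card Fq) ^ l else 0 := by
      rw [eCoeff]
      rw [← mul_assoc, mul_inv_cancel₀ hfEne, one_mul]
    set B : Polynomial Fq :=
      c * ∏ j ∈ Finset.Icc 1 r, b (n + 1 - j) ^ (Fintype.card Fq) ^ j with hB
    set U : integralClosure (Polynomial Fq) E :=
      ∑ l ∈ Finset.Icc 1 r, if h : 1 ≤ l ∧ l ≤ n + 1 then
        algebraMap (Polynomial Fq) (integralClosure (Polynomial Fq) E)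
          (p ^ ((Fintype.card Fq) ^ l - 1 - ε) *
            ∏ j ∈ (Finset.Icc 1 r).erase l, b (n + 1 - j) ^ (Fintype.card Fq) ^ j)
          * a l * (u (n + 1 - l)) ^ (Fintype.card Fq) ^ l
      else 0 with hU
    have hpB : ¬ p ∣ B := by
      intro hdvd
      have hprime := hp.prime
      rcases hprime.dvd_mul.mp hdvd with h | h
      · exact hpc h
      · obtain ⟨j, hj, hdj⟩ := (Prime.dvd_finset_prod_iff hprime _).mp h
        exact hb (n + 1 - j) (hprime.dvd_of_dvd_pow hdj)
    refine ⟨U, B, hpB, ?_⟩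
    refine mul_left_cancel₀ hfEne ?_
    have rearr : ∀ x y z w : E, x * (y * (z * w)) = y * z * (x * w) := by intros; ring
    rw [rearr, hrec]
    have hUcoe : (U : E) = ∑ l ∈ Finset.Icc 1 r,
        (((if h : 1 ≤ l ∧ l ≤ n + 1 then
          algebraMap (Polynomial Fq) (integralClosure (Polynomial Fq) E)
            (p ^ ((Fintype.card Fq) ^ l - 1 - ε) *
              ∏ j ∈ (Finset.Icc 1 r).erase l, b (n + 1 - j) ^ (Fintype.card Fq) ^ j)
            * a l * (u (n + 1 - l)) ^ (Fintype.card Fq) ^ l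
        else 0) : integralClosure (Polynomial Fq) E) : E) := by
      rw [hU]
      exact map_sum ((integralClosure (Polynomial Fq) E).val) _ _
    rw [hfmap, hfc, hUcoe]
    simp only [Finset.mul_sum]
    refine Finset.sum_congr rfl fun l hl => ?_
    by_cases h : 1 ≤ l ∧ l ≤ n + 1
    · rw [dif_pos h, dif_pos h]
      -- key equation from the inductive hypothesis, raised to the q^l power
      have hk : n + 1 - l < n + 1 := by omega
      have key := heq (n + 1 - l) hk
      have key2 := congrArg (· ^ (Fintype.card Fq) ^ l) key
      simp only [mul_pow] at key2
      rw [← map_pow, ← map_pow, ← pow_mul] at key2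
      have hexp : (Fintype.card Fq) ^ (n + 1 - l) * (Fintype.card Fq) ^ l
          = (Fintype.card Fq) ^ (n + 1) := by
        rw [← pow_add]
        congr 1
        omega
      rw [hexp] at key2
      have h2Q : 2 ≤ (Fintype.card Fq) ^ l :=
        Nat.one_lt_pow (by omega) hq2
      rw [show (algebraMap (Polynomial Fq) E p) ^ (Fintype.card Fq) ^ l
          = (algebraMap (Polynomial Fq) E p) ^ (1 + ε) *
            (algebraMap (Polynomial Fq) E p) ^ ((Fintype.card Fq) ^ l - 1 - ε) by
        rw [← pow_add]; congr 1; omega] at key2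
      simp only [map_mul, map_pow] at key2
      -- expand B and the coercions
      rw [hB, ← Finset.mul_prod_erase _ _ hl]
      push_cast
      linear_combination (algebraMap (Polynomial Fq) E c *
        (∏ j ∈ (Finset.Icc 1 r).erase l,
          algebraMap (Polynomial Fq) E (b (n + 1 - j)) ^ (Fintype.card Fq) ^ j) *
        (a l : E)) * key2
    · rw [dif_neg h, dif_neg h]
      simp

end
end
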